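/- Each of the three elements x_1 = a_4r + a_3r^2, x_2 = a_4^2r + 2a_3a_4r^2 + 3a_3^2r^3, and x_3 = a_4^3r + 3a_3a_4^2r^2 − a_3^2a_4r^3 − 3a_3^3r^4 of C[r] is a cocycle: d(x_1) = d(x_2) = d(x_3) = 0 in C[r_1,r_2]. -/

import Mathlib

/-!
`Cbar = 𝔽_5[a_3,a_4]` (the variables `0,1 : Fin 2` are `a_3, a_4`),
`q(t) = t^5 + a_3t^2 + a_4t`, and `etaR : Cbar → Cbar[r]` is the 𝔽_5-algebra map sending
`a_i` (for `i = 3,4`) to the coefficient of `x^{5-i}` in `q(x+r) - q(r)`, computed in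
`Cbar[r][x]`.  This is the reduction modulo `(5, a_1, a_2, a_5)` of the
Gorbounov–Hopkins–Mahowald Hopf algebroid at the prime `5`.
-/

/-- The ring `C = 𝔽_5[a_3,a_4]`. -/
abbrev Cbar : Type := MvPolynomial (Fin 2) (ZMod 5)

/-- The generator `a_3`. -/
noncomputable def a3 : Cbar := MvPolynomial.X 0
/-- The generator `a_4`. -/
noncomputable def a4 : Cbar := MvPolynomial.X 1

/-- The polynomial `q(t) = t^5 + a_3t^2 + a_4t` as an element of `C[t]`. -/
noncomputable def q : Polynomial Cbar :=
  Polynomial.X ^ 5 + Polynomial.C a3 * Polynomial.X ^ 2 + Polynomial.C a4 * Polynomial.X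

/-- `q(x+r) - q(r)`, an element of `C[r][x]` (the inner variable is `r`, the outer is `x`). -/
noncomputable def qShift : Polynomial (Polynomial Cbar) :=
  Polynomial.eval₂ (Polynomial.C.comp Polynomial.C)
      (Polynomial.X + Polynomial.C Polynomial.X) q -
    Polynomial.eval₂ (Polynomial.C.comp Polynomial.C) (Polynomial.C Polynomial.X) q

/-- The right unit `η_R : C → C[r]`, sending `a_i` (for `i = 3,4`) to the coefficient of
`x^{5-i}` in `q(x+r) - q(r)`. -/
noncomputable def etaR : Cbar →ₐ[ZMod 5] Polynomial Cbar :=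
  MvPolynomial.aeval (fun k : Fin 2 => qShift.coeff (2 - k.1))

/-- The cobar differential: for `f = ∑_k c_k r^k`, `d(f) = ∑_k η_R(c_k)[r:=r_1]·r_2^k
− f[r:=r_1+r_2] + f[r:=r_1]`, an element of `C[r_1][r_2]` (the inner variable is `r_1`,
the outer is `r_2`). -/
noncomputable def cobarD (f : Polynomial Cbar) : Polynomial (Polynomial Cbar) :=
  (∑ k ∈ Finset.range (f.natDegree + 1),
      Polynomial.C (etaR (f.coeff k)) * Polynomial.X ^ k) -
    Polynomial.eval₂ (Polynomial.C.comp Polynomial.C)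
      (Polynomial.C Polynomial.X + Polynomial.X) f +
    Polynomial.C f

/-- The class `b = r_1^4r_2 + 2r_1^3r_2^2 + 2r_1^2r_2^3 + r_1r_2^4`, the mod-5 reduction of
`((r_1+r_2)^5 − r_1^5 − r_2^5)/5`. -/
noncomputable def bclass : Polynomial (Polynomial Cbar) :=
  Polynomial.C (Polynomial.X ^ 4) * Polynomial.X +
    2 * Polynomial.C (Polynomial.X ^ 3) * Polynomial.X ^ 2 +
    2 * Polynomial.C (Polynomial.X ^ 2) * Polynomial.X ^ 3 +
    Polynomial.C Polynomial.X * Polynomial.X ^ 4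


section

local instance : Fact (Nat.Prime 5) := ⟨by norm_num⟩

lemma qShift_eq : qShift = Polynomial.X ^ 5 +
    Polynomial.C (Polynomial.C a3) * Polynomial.X ^ 2 +
    Polynomial.C (2 * Polynomial.C a3 * Polynomial.X + Polynomial.C a4) * Polynomial.X := by
  have h5 : (Polynomial.X + Polynomial.C (Polynomial.X : Polynomial Cbar)) ^ 5 =
      Polynomial.X ^ 5 + Polynomial.C (Polynomial.X : Polynomial Cbar) ^ 5 :=
    add_pow_char (R := Polynomial (Polynomial Cbar)) _ _ 5
  unfold qShift q
  simp only [Polynomial.eval₂_add, Polynomial.eval₂_mul (R := Cbar) (S := Polynomial (Polynomial Cbar)), Polynomial.eval₂_pow (R := Cbar) (S := Polynomial (Polynomial Cbar)),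
    Polynomial.eval₂_C, Polynomial.eval₂_X, RingHom.coe_comp, Function.comp_apply]
  rw [h5]
  simp only [map_add, map_mul, map_ofNat]
  ring

lemma etaR_a3 : etaR a3 = Polynomial.C a3 := by
  simp [etaR, a3, qShift_eq, Polynomial.coeff_X, Polynomial.coeff_one]

lemma etaR_a4 : etaR a4 = Polynomial.C a4 + 2 * Polynomial.C a3 * Polynomial.X := by
  simp [etaR, a4, qShift_eq, Polynomial.coeff_X, Polynomial.coeff_one]
  ring

lemma cbar_three_ne_zero : (3:Cbar) ≠ 0 := by
  intro h
  have h2 := congrArg MvPolynomial.constantCoeff h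
  simp only [map_ofNat, map_zero] at h2
  revert h2
  decide

lemma x1_cocycle : cobarD (Polynomial.C a4 * Polynomial.X + Polynomial.C a3 * Polynomial.X ^ 2) = 0 := by
  have hd : (Polynomial.C a4 * Polynomial.X + Polynomial.C a3 * Polynomial.X ^ 2).natDegree = 2 := by
    compute_degree!
    · exact MvPolynomial.X_ne_zero 0
  unfold cobarD
  rw [hd]
  simp only [Finset.sum_range_succ, Finset.sum_range_zero, Polynomial.coeff_add,
    Polynomial.coeff_C_mul, Polynomial.coeff_X_pow, Polynomial.coeff_X, Polynomial.eval₂_add,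
    Polynomial.eval₂_mul (R := Cbar) (S := Polynomial (Polynomial Cbar)), Polynomial.eval₂_pow (R := Cbar) (S := Polynomial (Polynomial Cbar)), Polynomial.eval₂_C, Polynomial.eval₂_X,
    RingHom.coe_comp, Function.comp_apply]
  norm_num
  simp only [etaR_a3, etaR_a4, map_add, map_mul, map_zero, map_one, map_ofNat]
  ring

lemma x2_cocycle : cobarD
    (Polynomial.C (a4 ^ 2) * Polynomial.X + 2 * Polynomial.C (a3 * a4) * Polynomial.X ^ 2 +
      3 * Polynomial.C (a3 ^ 2) * Polynomial.X ^ 3) = 0 := by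
  have e2 : Polynomial.C (a4 ^ 2) * Polynomial.X + 2 * Polynomial.C (a3 * a4) * Polynomial.X ^ 2 +
      3 * Polynomial.C (a3 ^ 2) * Polynomial.X ^ 3
      = Polynomial.C (a4 ^ 2) * Polynomial.X + Polynomial.C (2 * (a3 * a4)) * Polynomial.X ^ 2 +
        Polynomial.C (3 * a3 ^ 2) * Polynomial.X ^ 3 := by
    simp only [map_mul, map_ofNat, map_pow]
  rw [e2]
  have h3 : (3:Cbar) ≠ 0 := cbar_three_ne_zero
  have hd : (Polynomial.C (a4 ^ 2) * Polynomial.X + Polynomial.C (2 * (a3 * a4)) * Polynomial.X ^ 2 +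
      Polynomial.C (3 * a3 ^ 2) * Polynomial.X ^ 3).natDegree = 3 := by
    compute_degree!
    exact ⟨h3, MvPolynomial.X_ne_zero 0⟩
  unfold cobarD
  rw [hd]
  simp only [Finset.sum_range_succ, Finset.sum_range_zero, Polynomial.coeff_add,
    Polynomial.coeff_C_mul, Polynomial.coeff_X_pow, Polynomial.coeff_X, Polynomial.eval₂_add,
    Polynomial.eval₂_mul (R := Cbar) (S := Polynomial (Polynomial Cbar)), Polynomial.eval₂_pow (R := Cbar) (S := Polynomial (Polynomial Cbar)), Polynomial.eval₂_C, Polynomial.eval₂_X,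
    RingHom.coe_comp, Function.comp_apply]
  norm_num
  simp only [etaR_a3, etaR_a4, map_add, map_mul, map_pow, map_zero, map_one, map_ofNat]
  have h5 : (5 : Polynomial (Polynomial Cbar)) = 0 := by
    exact_mod_cast CharP.cast_eq_zero (Polynomial (Polynomial Cbar)) 5
  have h10 : (10 : Polynomial (Polynomial Cbar)) = 0 := by rw [show (10 : Polynomial (Polynomial Cbar)) = 2*5 by norm_num, h5, mul_zero]
  have h15 : (15 : Polynomial (Polynomial Cbar)) = 0 := by rw [show (15 : Polynomial (Polynomial Cbar)) = 3*5 by norm_num, h5, mul_zero]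
  have h20 : (20 : Polynomial (Polynomial Cbar)) = 0 := by rw [show (20 : Polynomial (Polynomial Cbar)) = 4*5 by norm_num, h5, mul_zero]
  have h30 : (30 : Polynomial (Polynomial Cbar)) = 0 := by rw [show (30 : Polynomial (Polynomial Cbar)) = 6*5 by norm_num, h5, mul_zero]
  ring_nf
  simp only [Nat.rawCast, Nat.cast_ofNat]
  simp only [h5, h10, h15, h20, h30, mul_zero, zero_mul, neg_zero, add_zero, zero_add,
    sub_zero, zero_sub, neg_neg, neg_zero]
  try ring

lemma x3_cocycle : cobarD
    (Polynomial.C (a4 ^ 3) * Polynomial.X +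
      3 * Polynomial.C (a3 * a4 ^ 2) * Polynomial.X ^ 2 -
      Polynomial.C (a3 ^ 2 * a4) * Polynomial.X ^ 3 -
      3 * Polynomial.C (a3 ^ 3) * Polynomial.X ^ 4) = 0 := by
  have e3 : Polynomial.C (a4 ^ 3) * Polynomial.X +
        3 * Polynomial.C (a3 * a4 ^ 2) * Polynomial.X ^ 2 -
        Polynomial.C (a3 ^ 2 * a4) * Polynomial.X ^ 3 -
        3 * Polynomial.C (a3 ^ 3) * Polynomial.X ^ 4
      = Polynomial.C (a4 ^ 3) * Polynomial.X + Polynomial.C (3 * (a3 * a4 ^ 2)) * Polynomial.X ^ 2 +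
        Polynomial.C (-(a3 ^ 2 * a4)) * Polynomial.X ^ 3 +
        Polynomial.C (-(3 * a3 ^ 3)) * Polynomial.X ^ 4 := by
    simp only [map_mul, map_ofNat, map_pow, map_neg]
    ring
  rw [e3]
  have h3 : (3:Cbar) ≠ 0 := cbar_three_ne_zero
  have hd : (Polynomial.C (a4 ^ 3) * Polynomial.X + Polynomial.C (3 * (a3 * a4 ^ 2)) * Polynomial.X ^ 2 +
      Polynomial.C (-(a3 ^ 2 * a4)) * Polynomial.X ^ 3 +
      Polynomial.C (-(3 * a3 ^ 3)) * Polynomial.X ^ 4).natDegree = 4 := by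
    compute_degree!
    exact ⟨h3, MvPolynomial.X_ne_zero 0⟩
  unfold cobarD
  rw [hd]
  simp only [Finset.sum_range_succ, Finset.sum_range_zero, Polynomial.coeff_add,
    Polynomial.coeff_C_mul, Polynomial.coeff_X_pow, Polynomial.coeff_X, Polynomial.eval₂_add,
    Polynomial.eval₂_mul (R := Cbar) (S := Polynomial (Polynomial Cbar)), Polynomial.eval₂_pow (R := Cbar) (S := Polynomial (Polynomial Cbar)), Polynomial.eval₂_C, Polynomial.eval₂_X,
    RingHom.coe_comp, Function.comp_apply]
  norm_num
  simp only [etaR_a3, etaR_a4, map_add, map_mul, map_pow, map_neg, map_zero, map_one, map_ofNat]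
  have h5 : (5 : Polynomial (Polynomial Cbar)) = 0 := by
    exact_mod_cast CharP.cast_eq_zero (Polynomial (Polynomial Cbar)) 5
  have h10 : (10 : Polynomial (Polynomial Cbar)) = 0 := by rw [show (10 : Polynomial (Polynomial Cbar)) = 2*5 by norm_num, h5, mul_zero]
  have h15 : (15 : Polynomial (Polynomial Cbar)) = 0 := by rw [show (15 : Polynomial (Polynomial Cbar)) = 3*5 by norm_num, h5, mul_zero]
  have h20 : (20 : Polynomial (Polynomial Cbar)) = 0 := by rw [show (20 : Polynomial (Polynomial Cbar)) = 4*5 by norm_num, h5, mul_zero]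
  have h30 : (30 : Polynomial (Polynomial Cbar)) = 0 := by rw [show (30 : Polynomial (Polynomial Cbar)) = 6*5 by norm_num, h5, mul_zero]
  ring_nf
  simp only [Nat.rawCast, Nat.cast_ofNat]
  simp only [h5, h10, h15, h20, h30, mul_zero, zero_mul, neg_zero, add_zero, zero_add,
    sub_zero, zero_sub, neg_neg, neg_zero]
  try ring

end

/-- The elements `x_1 = a_4r + a_3r²`, `x_2 = a_4²r + 2a_3a_4r² + 3a_3²r³`, and
`x_3 = a_4³r + 3a_3a_4²r² − a_3²a_4r³ − 3a_3³r⁴` of `C[r]` are cocycles. -/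
theorem x1_x2_x3_cocycles :
    cobarD (Polynomial.C a4 * Polynomial.X + Polynomial.C a3 * Polynomial.X ^ 2) = 0 ∧
    cobarD
        (Polynomial.C (a4 ^ 2) * Polynomial.X + 2 * Polynomial.C (a3 * a4) * Polynomial.X ^ 2 +
          3 * Polynomial.C (a3 ^ 2) * Polynomial.X ^ 3) = 0 ∧
    cobarD
        (Polynomial.C (a4 ^ 3) * Polynomial.X +
          3 * Polynomial.C (a3 * a4 ^ 2) * Polynomial.X ^ 2 -
          Polynomial.C (a3 ^ 2 * a4) * Polynomial.X ^ 3 -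
          3 * Polynomial.C (a3 ^ 3) * Polynomial.X ^ 4) = 0 := by
  exact ⟨x1_cocycle, x2_cocycle, x3_cocycle⟩
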